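/- Let x = Uτ + U_⊥τ_⊥ with y = θ*^T x, let θ satisfy X_tr^T θ = Y_tr, and let θ̃ = θ_0 + α(θ − θ_0) for α ∈ [0,1]. Then |θ̃^T x − y| ≤ (1−α)·ε·‖τ‖₂ + (ε + α‖θ − θ_0‖₂)·‖τ_⊥‖₂, where ε = ‖θ_0 − θ*‖₂. -/

import Mathlib

open Matrix

/-- Euclidean (L2) norm of a vector in `ℝ^d`. -/
noncomputable def e2norm {d : ℕ} (v : Fin d → ℝ) : ℝ :=
  ‖(WithLp.equiv 2 (Fin d → ℝ)).symm v‖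

lemma e2norm_eq_sqrt {d : ℕ} (v : Fin d → ℝ) : e2norm v = Real.sqrt (v ⬝ᵥ v) := by
  rw [e2norm, EuclideanSpace.norm_eq]
  congr 1
  simp [dotProduct, Real.norm_eq_abs, sq_abs, sq]

lemma abs_dot_le {d : ℕ} (v w : Fin d → ℝ) : |v ⬝ᵥ w| ≤ e2norm v * e2norm w := by
  have h := abs_real_inner_le_norm ((WithLp.equiv 2 (Fin d → ℝ)).symm v)
    ((WithLp.equiv 2 (Fin d → ℝ)).symm w)
  have hi : (inner ℝ ((WithLp.equiv 2 (Fin d → ℝ)).symm v)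
      ((WithLp.equiv 2 (Fin d → ℝ)).symm w) : ℝ) = v ⬝ᵥ w := by
    simp [PiLp.inner_apply, dotProduct, mul_comm]
  rw [hi] at h
  exact h

lemma e2norm_mulVec {d m : ℕ} (U : Matrix (Fin d) (Fin m) ℝ) (hU : Uᵀ * U = 1)
    (v : Fin m → ℝ) : e2norm (U *ᵥ v) = e2norm v := by
  rw [e2norm_eq_sqrt, e2norm_eq_sqrt]
  congr 1
  have h1 : U *ᵥ v = v ᵥ* Uᵀ := by rw [← Matrix.mulVec_transpose, Matrix.transpose_transpose]
  rw [Matrix.dotProduct_mulVec, h1, Matrix.vecMul_vecMul, hU, Matrix.vecMul_one]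

theorem projected_model_pointwise_bound {d n : ℕ}
    (X U : Matrix (Fin d) (Fin n) ℝ) (S V : Matrix (Fin n) (Fin n) ℝ)
    (Uperp : Matrix (Fin d) (Fin (d - n)) ℝ)
    (hX : X = U * S * Vᵀ) (hU : Uᵀ * U = 1) (hV : Vᵀ * V = 1)
    (hS : IsUnit S.det) (hUp : Uperpᵀ * Uperp = 1)
    (θstar θ0 θ : Fin d → ℝ)
    (hsol : Xᵀ *ᵥ θ = Xᵀ *ᵥ θstar)
    (α : ℝ) (hα : α ∈ Set.Icc (0 : ℝ) 1)
    (τ : Fin n → ℝ) (τperp : Fin (d - n) → ℝ)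
    (x : Fin d → ℝ) (hx : x = U *ᵥ τ + Uperp *ᵥ τperp)
    (y : ℝ) (hy : y = θstar ⬝ᵥ x) :
    |(θ0 + α • (θ - θ0)) ⬝ᵥ x - y| ≤
      (1 - α) * e2norm (θ0 - θstar) * e2norm τ +
        (e2norm (θ0 - θstar) + α * e2norm (θ - θ0)) * e2norm τperp := by
  obtain ⟨hα0, hα1⟩ := hα
  set a : Fin d → ℝ := θ0 - θstar with ha
  set b : Fin d → ℝ := θ - θ0 with hb
  -- Uᵀ *ᵥ (θ - θstar) = 0
  have hker : Uᵀ *ᵥ (θ - θstar) = 0 := by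
    have h0 : Xᵀ *ᵥ (θ - θstar) = 0 := by
      rw [Matrix.mulVec_sub, hsol, sub_self]
    have hXt : Xᵀ = V * (Sᵀ * Uᵀ) := by
      rw [hX]; simp [Matrix.transpose_mul, Matrix.mul_assoc]
    rw [hXt, ← Matrix.mulVec_mulVec] at h0
    have h1 : Vᵀ *ᵥ (V *ᵥ ((Sᵀ * Uᵀ) *ᵥ (θ - θstar))) = 0 := by rw [h0, Matrix.mulVec_zero]
    rw [Matrix.mulVec_mulVec, hV, Matrix.one_mulVec, ← Matrix.mulVec_mulVec] at h1
    have hSt : IsUnit Sᵀ.det := by rwa [Matrix.det_transpose]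
    have h2 : (Sᵀ)⁻¹ *ᵥ (Sᵀ *ᵥ (Uᵀ *ᵥ (θ - θstar))) = 0 := by rw [h1, Matrix.mulVec_zero]
    rwa [Matrix.mulVec_mulVec, Matrix.nonsing_inv_mul _ hSt, Matrix.one_mulVec] at h2
  have hbU : b ⬝ᵥ (U *ᵥ τ) = -(a ⬝ᵥ (U *ᵥ τ)) := by
    have key : (θ - θstar) ⬝ᵥ (U *ᵥ τ) = 0 := by
      rw [Matrix.dotProduct_mulVec, ← Matrix.mulVec_transpose, hker]
      simp
    have hba : b = (θ - θstar) - a := by rw [ha, hb]; abel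
    rw [hba, sub_dotProduct, key, zero_sub]
  -- error decomposition
  have herr : (θ0 + α • (θ - θ0)) ⬝ᵥ x - y =
      (1 - α) * (a ⬝ᵥ (U *ᵥ τ)) + a ⬝ᵥ (Uperp *ᵥ τperp) + α * (b ⬝ᵥ (Uperp *ᵥ τperp)) := by
    have hab : θ0 + α • (θ - θ0) = (a + α • b) + θstar := by rw [ha, hb]; abel
    rw [hy, hab, add_dotProduct, add_sub_cancel_right, hx,
      dotProduct_add, add_dotProduct, add_dotProduct,
      smul_dotProduct, smul_dotProduct, hbU]
    simp only [smul_eq_mul]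
    ring
  rw [herr]
  have hnU : e2norm (U *ᵥ τ) = e2norm τ := e2norm_mulVec U hU τ
  have hnUp : e2norm (Uperp *ᵥ τperp) = e2norm τperp := e2norm_mulVec Uperp hUp τperp
  have c1 : |a ⬝ᵥ (U *ᵥ τ)| ≤ e2norm a * e2norm τ := by
    rw [← hnU]; exact abs_dot_le _ _
  have c2 : |a ⬝ᵥ (Uperp *ᵥ τperp)| ≤ e2norm a * e2norm τperp := by
    rw [← hnUp]; exact abs_dot_le _ _
  have c3 : |b ⬝ᵥ (Uperp *ᵥ τperp)| ≤ e2norm b * e2norm τperp := by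
    rw [← hnUp]; exact abs_dot_le _ _
  calc |(1 - α) * (a ⬝ᵥ (U *ᵥ τ)) + a ⬝ᵥ (Uperp *ᵥ τperp) + α * (b ⬝ᵥ (Uperp *ᵥ τperp))|
      ≤ |(1 - α) * (a ⬝ᵥ (U *ᵥ τ))| + |a ⬝ᵥ (Uperp *ᵥ τperp)| + |α * (b ⬝ᵥ (Uperp *ᵥ τperp))| := by
        exact (abs_add_le _ _).trans (add_le_add_left (abs_add_le _ _) _)
    _ = (1 - α) * |a ⬝ᵥ (U *ᵥ τ)| + |a ⬝ᵥ (Uperp *ᵥ τperp)| + α * |b ⬝ᵥ (Uperp *ᵥ τperp)| := by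
        rw [abs_mul, abs_mul, abs_of_nonneg (by linarith : (0:ℝ) ≤ 1 - α), abs_of_nonneg hα0]
    _ ≤ (1 - α) * (e2norm a * e2norm τ) + e2norm a * e2norm τperp + α * (e2norm b * e2norm τperp) := by
        gcongr <;> linarith
    _ = (1 - α) * e2norm a * e2norm τ + (e2norm a + α * e2norm b) * e2norm τperp := by ring
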